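/- Let μ be a probability measure on ℝᵐ × ℝⁿ with disintegration μ(dx, dy) = μ_X(dx) κ(x, dy), and let Q : ℝⁿ × ℝᵏ → ℝ be measurable, bounded below, and such that a ↦ Q(y,a) is convex for every y. Let π be a coupling of μ_X with another probability measure ν_X on ℝᵐ, with disintegration π(dx, dx') = μ_X(dx) λ(x, dx'). Then for any measurable g : ℝᵐ → ℝᵏ, defining h(x) := ∫ g(x') λ(x, dx'), one has ∫∫ Q(y, h(x)) κ(x,dy) μ_X(dx) ≤ ∫∫∫ Q(y, g(x')) λ(x,dx') κ(x,dy) μ_X(dx), provided all integrals are finite. -/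

import Mathlib

open MeasureTheory ProbabilityTheory

/-- The Jensen's-inequality step: replacing a randomized control `g(x')`, averaged
over the coupling kernel `lam(x, ·)`, by its conditional mean `h(x) = ∫ g dlam(x,·)`
does not increase the expected convex cost. -/
theorem jensen_step_convex_cost
    (m nn k : ℕ)
    (μX : Measure (Fin m → ℝ)) [IsProbabilityMeasure μX]
    (κ : Kernel (Fin m → ℝ) (Fin nn → ℝ)) [IsMarkovKernel κ]
    (lam : Kernel (Fin m → ℝ) (Fin m → ℝ)) [IsMarkovKernel lam]
    (Q : (Fin nn → ℝ) → EuclideanSpace ℝ (Fin k) → ℝ)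
    (hQmeas : Measurable (Function.uncurry Q))
    (c : ℝ) (hQbd : ∀ y a, c ≤ Q y a)
    (hQconv : ∀ y, ConvexOn ℝ Set.univ (Q y))
    (g : (Fin m → ℝ) → EuclideanSpace ℝ (Fin k)) (hg : Measurable g)
    (hgint : ∀ x, Integrable g (lam x))
    (hint1 : ∀ x, Integrable (fun y => Q y (∫ x', g x' ∂(lam x))) (κ x))
    (hint2 : ∀ x x', Integrable (fun y => Q y (g x')) (κ x))
    (hint3 : ∀ x, Integrable (fun x' => ∫ y, Q y (g x') ∂(κ x)) (lam x))
    (hint4 : Integrable (fun x => ∫ y, Q y (∫ x', g x' ∂(lam x)) ∂(κ x)) μX)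
    (hint5 : Integrable (fun x => ∫ x', ∫ y, Q y (g x') ∂(κ x) ∂(lam x)) μX) :
    ∫ x, ∫ y, Q y (∫ x', g x' ∂(lam x)) ∂(κ x) ∂μX
      ≤ ∫ x, ∫ x', ∫ y, Q y (g x') ∂(κ x) ∂(lam x) ∂μX := by
  refine integral_mono hint4 hint5 fun x => ?_
  simp only
  set h0 : EuclideanSpace ℝ (Fin k) := ∫ x', g x' ∂(lam x) with hh0
  -- measurability helpers
  have hmeasQg : Measurable (fun p : (Fin nn → ℝ) × (Fin m → ℝ) => Q p.1 (g p.2)) :=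
    hQmeas.comp (measurable_fst.prodMk (hg.comp measurable_snd))
  have hQy : ∀ y : Fin nn → ℝ, Measurable (fun x' => Q y (g x')) := fun y =>
    hQmeas.comp (measurable_const.prodMk hg)
  -- Step 1: rewrite both sides by subtracting c
  have probκ : (κ x) Set.univ = 1 := measure_univ
  have int_const_κ : ∫ (_ : Fin nn → ℝ), c ∂(κ x) = c := by
    simp [integral_const]
  have lhs_eq : ∫ y, Q y h0 ∂(κ x) = (∫ y, (Q y h0 - c) ∂(κ x)) + c := by
    rw [integral_sub (hint1 x) (integrable_const c), int_const_κ]; ring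
  have inner_eq : ∀ x', ∫ y, Q y (g x') ∂(κ x) = (∫ y, (Q y (g x') - c) ∂(κ x)) + c := by
    intro x'
    rw [integral_sub (hint2 x x') (integrable_const c), int_const_κ]; ring
  have hint3' : Integrable (fun x' => ∫ y, (Q y (g x') - c) ∂(κ x)) (lam x) := by
    have : (fun x' => ∫ y, (Q y (g x') - c) ∂(κ x))
        = fun x' => (∫ y, Q y (g x') ∂(κ x)) - c := by
      funext x'
      rw [integral_sub (hint2 x x') (integrable_const c), int_const_κ]
    rw [this]
    exact (hint3 x).sub (integrable_const c)
  have rhs_eq : ∫ x', ∫ y, Q y (g x') ∂(κ x) ∂(lam x)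
      = (∫ x', ∫ y, (Q y (g x') - c) ∂(κ x) ∂(lam x)) + c := by
    calc ∫ x', ∫ y, Q y (g x') ∂(κ x) ∂(lam x)
        = ∫ x', ((∫ y, (Q y (g x') - c) ∂(κ x)) + c) ∂(lam x) := by
          exact integral_congr_ae (Filter.Eventually.of_forall fun x' => inner_eq x')
      _ = (∫ x', ∫ y, (Q y (g x') - c) ∂(κ x) ∂(lam x)) + c := by
          rw [integral_add hint3' (integrable_const c)]
          simp [integral_const]
  rw [lhs_eq, rhs_eq]
  gcongr
  -- now prove the centered inequality
  -- nonnegativity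
  have hnn : ∀ y a, 0 ≤ Q y a - c := fun y a => sub_nonneg.2 (hQbd y a)
  -- key pointwise (in y) Jensen bound, in ℝ≥0∞
  have keyA : ∀ y : Fin nn → ℝ,
      ENNReal.ofReal (Q y h0 - c)
        ≤ ∫⁻ x', ENNReal.ofReal (Q y (g x') - c) ∂(lam x) := by
    intro y
    by_cases hI : Integrable (fun x' => Q y (g x')) (lam x)
    · -- Jensen's inequality
      have hJ : Q y h0 ≤ ∫ x', Q y (g x') ∂(lam x) := by
        have hconv := hQconv y
        have hcont : ContinuousOn (Q y) Set.univ :=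
          hconv.continuousOn isOpen_univ
        exact hconv.map_integral_le hcont isClosed_univ
          (Filter.Eventually.of_forall fun _ => Set.mem_univ _) (hgint x) hI
      have hIc : Integrable (fun x' => Q y (g x') - c) (lam x) :=
        hI.sub (integrable_const c)
      calc ENNReal.ofReal (Q y h0 - c)
          ≤ ENNReal.ofReal ((∫ x', Q y (g x') ∂(lam x)) - c) := by
            exact ENNReal.ofReal_le_ofReal (by linarith)
        _ = ENNReal.ofReal (∫ x', (Q y (g x') - c) ∂(lam x)) := by
            rw [integral_sub hI (integrable_const c)]
            congr 1
            simp [integral_const]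
        _ = ∫⁻ x', ENNReal.ofReal (Q y (g x') - c) ∂(lam x) :=
            ofReal_integral_eq_lintegral_ofReal hIc
              (Filter.Eventually.of_forall fun x' => hnn y (g x'))
    · -- non-integrable: the lintegral is infinite
      have htop : ∫⁻ x', ENNReal.ofReal (Q y (g x') - c) ∂(lam x) = ⊤ := by
        by_contra hfin
        apply hI
        have hmeas' : Measurable (fun x' => Q y (g x') - c) := (hQy y).sub measurable_const
        have hint : Integrable (fun x' => Q y (g x') - c) (lam x) := by
          refine ⟨hmeas'.aestronglyMeasurable, ?_⟩
          rw [hasFiniteIntegral_iff_ofReal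
            (Filter.Eventually.of_forall fun x' => hnn y (g x'))]
          exact lt_top_iff_ne_top.2 hfin
        have h' := hint.add (integrable_const c)
        refine h'.congr (Filter.Eventually.of_forall fun x' => ?_)
        simp
      rw [htop]; exact le_top
  -- convert both sides to lintegrals
  have hl : ENNReal.ofReal (∫ y, (Q y h0 - c) ∂(κ x))
      = ∫⁻ y, ENNReal.ofReal (Q y h0 - c) ∂(κ x) :=
    ofReal_integral_eq_lintegral_ofReal ((hint1 x).sub (integrable_const c))
      (Filter.Eventually.of_forall fun y => hnn y h0)
  have hr : ENNReal.ofReal (∫ x', ∫ y, (Q y (g x') - c) ∂(κ x) ∂(lam x))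
      = ∫⁻ y, ∫⁻ x', ENNReal.ofReal (Q y (g x') - c) ∂(lam x) ∂(κ x) := by
    have h1 : ENNReal.ofReal (∫ x', ∫ y, (Q y (g x') - c) ∂(κ x) ∂(lam x))
        = ∫⁻ x', ENNReal.ofReal (∫ y, (Q y (g x') - c) ∂(κ x)) ∂(lam x) :=
      ofReal_integral_eq_lintegral_ofReal hint3'
        (Filter.Eventually.of_forall fun x' =>
          integral_nonneg fun y => hnn y (g x'))
    have h2 : ∀ x', ENNReal.ofReal (∫ y, (Q y (g x') - c) ∂(κ x))
        = ∫⁻ y, ENNReal.ofReal (Q y (g x') - c) ∂(κ x) := fun x' =>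
      ofReal_integral_eq_lintegral_ofReal ((hint2 x x').sub (integrable_const c))
        (Filter.Eventually.of_forall fun y => hnn y (g x'))
    rw [h1]
    simp_rw [h2]
    -- swap the lintegrals (Tonelli)
    rw [lintegral_lintegral_swap]
    exact ((ENNReal.measurable_ofReal.comp (hmeasQg.sub measurable_const)).comp
      measurable_swap).aemeasurable
  -- conclude via toReal monotonicity
  have hRfin : (∫⁻ y, ∫⁻ x', ENNReal.ofReal (Q y (g x') - c) ∂(lam x) ∂(κ x)) ≠ ⊤ := by
    rw [← hr]; exact ENNReal.ofReal_ne_top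
  have hle : ENNReal.ofReal (∫ y, (Q y h0 - c) ∂(κ x))
      ≤ ENNReal.ofReal (∫ x', ∫ y, (Q y (g x') - c) ∂(κ x) ∂(lam x)) := by
    rw [hl, hr]
    exact lintegral_mono keyA
  have h1 : (0:ℝ) ≤ ∫ y, (Q y h0 - c) ∂(κ x) := integral_nonneg fun y => hnn y h0
  have h2 : (0:ℝ) ≤ ∫ x', ∫ y, (Q y (g x') - c) ∂(κ x) ∂(lam x) :=
    integral_nonneg fun x' => integral_nonneg fun y => hnn y (g x')
  exact (ENNReal.ofReal_le_ofReal_iff h2).1 hle
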